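/- Let (u_k) be a sequence in H^{α/2}(𝕋ⁿ) with ‖u_k‖_{L²} = 1 and ∬_{|x−y|<R₀} |u_k(x)−u_k(y)|²/|x−y|^{n+α} dx dy → 0, where 0 < α < 2 and R₀ > 0. Then, along a subsequence, u_k converges strongly in L²(𝕋ⁿ) to a constant function u* with |u*| = 1. -/

import Mathlib

open MeasureTheory Filter Topology

instance : Fact ((0:ℝ) < 1) := ⟨one_pos⟩

section Helpers

open Set Metric

abbrev TT (n : ℕ) := Fin n → AddCircle (1:ℝ)

lemma cs_integral {X : Type*} [MeasurableSpace X] (μ : Measure X) [IsFiniteMeasure μ] {f : X → ℝ}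
    (hf : Integrable f μ) (hf2 : Integrable (fun x => f x ^ 2) μ) :
    (∫ x, f x ∂μ)^2 ≤ (μ Set.univ).toReal * ∫ x, f x ^ 2 ∂μ := by
  set m := (μ Set.univ).toReal with hm
  have hm0 : 0 ≤ m := ENNReal.toReal_nonneg
  set J := ∫ x, f x ∂μ with hI
  have key : 0 ≤ ∫ x, (m * f x - J)^2 ∂μ := integral_nonneg fun x => sq_nonneg _
  have expand : ∫ x, (m * f x - J)^2 ∂μ
      = m^2 * (∫ x, f x ^2 ∂μ) - 2*m*J*J + J^2 * m := by
    have h1 : Integrable (fun x => m^2 * f x ^2) μ := hf2.const_mul _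
    have h2 : Integrable (fun x => 2*m*J * f x) μ := hf.const_mul _
    have : ∀ x, (m * f x - J)^2 = m^2 * f x^2 - 2*m*J * f x + J^2 := by intro x; ring
    simp_rw [this]
    rw [integral_add ((h1.sub h2).congr (by filter_upwards with x; simp only [Pi.sub_apply]; try ring)) (integrable_const _), integral_sub h1 h2,
      integral_const_mul, integral_const_mul, integral_const]
    simp only [smul_eq_mul, Measure.real, ← hm, ← hI]
    ring
  rw [expand] at key
  rcases eq_or_lt_of_le hm0 with h | h
  · have hμ : μ = 0 := by
      have := ENNReal.toReal_eq_zero_iff (μ Set.univ) |>.mp (by rw [← hm, ← h])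
      rcases this with h' | h'
      · exact Measure.measure_univ_eq_zero.mp h'
      · exact absurd h' (measure_ne_top _ _)
    simp [hI, hμ, ← h]
  · nlinarith [key, h]

lemma setS_meas (n : ℕ) (R : ℝ) : MeasurableSet {p : TT n × TT n | dist p.1 p.2 < R} := by
  have : Continuous fun p : TT n × TT n => dist p.1 p.2 :=
    continuous_fst.dist continuous_snd
  exact measurableSet_lt this.measurable measurable_const

lemma setx_meas (n : ℕ) (R : ℝ) (x : TT n) : MeasurableSet {y : TT n | dist x y < R} :=
  measurableSet_lt ((continuous_const.dist continuous_id).measurable) measurable_const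

lemma fubini_set (n : ℕ) (R : ℝ) (f : TT n × TT n → ℝ) (hf : Integrable f (volume.prod volume)) :
    ∫ p in {p : TT n × TT n | dist p.1 p.2 < R}, f p ∂(volume.prod volume)
      = ∫ x, ∫ y in {y : TT n | dist x y < R}, f (x, y) := by
  rw [← integral_indicator (setS_meas n R)]
  rw [integral_prod _ (hf.indicator (setS_meas n R))]
  congr 1; funext x
  rw [← integral_indicator (setx_meas n R x)]
  congr 1

lemma vol_univ_one (n : ℕ) : (volume : Measure (TT n)) Set.univ = 1 := by
  rw [MeasureTheory.volume_pi, Measure.pi_univ]; simp [AddCircle.measure_univ]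

lemma vol_ball_eq (n : ℕ) (ρ : ℝ) (x : TT n) :
    volume (ball x ρ) = volume (ball (0 : TT n) ρ) := by
  have h : ball x ρ = (fun y => -x + y) ⁻¹' ball 0 ρ := by
    ext y; simp [mem_ball, dist_eq_norm, sub_zero, neg_add_eq_sub]
  rw [h, measure_preimage_add]

lemma norm_coe_le' (a : ℝ) : ‖((a:ℝ) : AddCircle (1:ℝ))‖ ≤ |a| := by
  simpa using (QuotientAddGroup.norm_mk_le_norm : ‖((a:ℝ) : AddCircle (1:ℝ))‖ ≤ ‖a‖)

lemma chain_bound (n : ℕ) (ρ : ℝ) (hρ : 0 < ρ) (N : ℕ) (hN : 1 ≤ N) (hNρ : 1/(N:ℝ) ≤ ρ)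
    (v : TT n → ℝ) (s : ℝ)
    (hstep : ∀ a b : TT n, dist a b ≤ ρ → |v a - v b| ≤ s) (x y : TT n) :
    |v x - v y| ≤ N * s := by
  have hN0 : (N:ℝ) ≠ 0 := by positivity
  choose t ht hcoe using fun i => AddCircle.eq_coe_Ico ((y - x) i)
  set z : ℕ → TT n := fun j i => x i + (((j:ℝ) * t i / N : ℝ) : AddCircle (1:ℝ)) with hz
  have z0 : z 0 = x := by
    funext i
    simp [hz]
  have zN : z N = y := by
    funext i
    have : ((N:ℝ) * t i / N : ℝ) = t i := by field_simp
    simp only [hz, this, hcoe i, Pi.sub_apply]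
    abel
  have htele : v x - v y = ∑ j ∈ Finset.range N, (v (z j) - v (z (j+1))) := by
    rw [Finset.sum_range_sub' (fun j => v (z j)) N, z0, zN]
  have hd : ∀ j, dist (z j) (z (j+1)) ≤ ρ := by
    intro j
    rw [dist_pi_le_iff hρ.le]
    intro i
    have e : dist (z j i) (z (j+1) i)
        = dist ((((j:ℝ) * t i / N : ℝ)) : AddCircle (1:ℝ)) ((((j+1:ℕ):ℝ) * t i / N : ℝ) : AddCircle (1:ℝ)) := by
      simp only [hz]
      exact dist_add_left _ _ _
    rw [e, dist_eq_norm]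
    have e2 : ((((j:ℝ) * t i / N : ℝ)) : AddCircle (1:ℝ)) - ((((j+1:ℕ):ℝ) * t i / N : ℝ) : AddCircle (1:ℝ))
        = ((((j:ℝ) * t i / N - ((j+1:ℕ):ℝ) * t i / N) : ℝ) : AddCircle (1:ℝ)) := rfl
    rw [e2]
    refine le_trans (norm_coe_le' _) ?_
    have : (j:ℝ) * t i / N - ((j+1:ℕ):ℝ) * t i / N = -(t i / N) := by push_cast; ring
    rw [this, abs_neg, abs_div]
    have h0t : 0 ≤ t i := (ht i).1
    have h1t : t i < 1 := (ht i).2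
    rw [abs_of_nonneg h0t, Nat.abs_cast]
    calc t i / N ≤ 1 / N := by gcongr
      _ ≤ ρ := hNρ
  calc |v x - v y| ≤ ∑ j ∈ Finset.range N, |v (z j) - v (z (j+1))| := by
        rw [htele]; exact Finset.abs_sum_le_sum_abs _ _
    _ ≤ ∑ _j ∈ Finset.range N, s := Finset.sum_le_sum fun j _ => hstep _ _ (hd j)
    _ = N * s := by simp [mul_comm]

noncomputable def Vol (n : ℕ) (R₀ : ℝ) : ℝ :=
  (volume (ball (0 : TT n) (min R₀ 1 / 4))).toReal

lemma key_lemma (n : ℕ) (α R₀ : ℝ) (hα : 0 < α) (hR : 0 < R₀)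
    (u : TT n → ℝ) (hu1 : Integrable u) (hu2 : Integrable (fun x => u x^2))
    (hH : Integrable (fun p : TT n × TT n =>
      (u p.1 - u p.2)^2 / dist p.1 p.2 ^ ((n:ℝ)+α)))
    (N : ℕ) (hN1 : 1 ≤ N) (hNρ : 1/(N:ℝ) ≤ min R₀ 1 / 4) :
    ∃ c : ℝ, ∫ x, (u x - c)^2
      ≤ (2 / Vol n R₀ + 2*(N:ℝ)^2 / (Vol n R₀)^2) *
        (∫ x, ∫ y in {y | dist x y < R₀}, (u x - u y)^2 / dist x y ^ ((n:ℝ)+α)) := by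
  set ρ : ℝ := min R₀ 1 / 4 with hρdef
  have hρ : 0 < ρ := by
    have := lt_min hR one_pos
    positivity
  have h3ρ1 : 3*ρ ≤ 1 := by
    have : min R₀ 1 ≤ 1 := min_le_right _ _
    rw [hρdef]; linarith
  have h3ρR : 3*ρ < R₀ := by
    have h1 : min R₀ 1 ≤ R₀ := min_le_left _ _
    have h2 : 0 < min R₀ 1 := lt_min hR one_pos
    rw [hρdef]; linarith
  have hρ1 : ρ ≤ 1 := by linarith
  have hρR : ρ < R₀ := by linarith
  set V : ℝ := Vol n R₀ with hVdef
  have hVb : ∀ x : TT n, (volume (ball x ρ)).toReal = V := by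
    intro x; rw [hVdef, Vol, ← hρdef, vol_ball_eq n ρ x]
  have hV : 0 < V := by
    rw [hVdef, Vol, ← hρdef]
    exact ENNReal.toReal_pos (measure_ball_pos _ _ hρ).ne' (measure_ne_top _ _)
  set q : TT n × TT n → ℝ := fun p => (u p.1 - u p.2)^2 / dist p.1 p.2 ^ ((n:ℝ)+α) with hqdef
  have hq0 : ∀ p, 0 ≤ q p := fun p =>
    div_nonneg (sq_nonneg _) (Real.rpow_nonneg dist_nonneg _)
  have hqp : ∀ p : TT n × TT n, dist p.1 p.2 ≤ 1 → (u p.1 - u p.2)^2 ≤ q p := by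
    intro p h1
    rcases eq_or_lt_of_le (dist_nonneg : 0 ≤ dist p.1 p.2) with h0 | h0
    · have hpe : p.1 = p.2 := by rw [← dist_le_zero]; rw [← h0]
      simp [hqdef, hpe]
    · have he : 0 ≤ (n:ℝ) + α := by positivity
      have hb1 : dist p.1 p.2 ^ ((n:ℝ)+α) ≤ 1 := Real.rpow_le_one h0.le h1 he
      have hb0 : 0 < dist p.1 p.2 ^ ((n:ℝ)+α) := Real.rpow_pos_of_pos h0 _
      rw [hqdef, le_div_iff₀ hb0]
      exact mul_le_of_le_one_right (sq_nonneg _) hb1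
  have hHq : Integrable q (volume.prod volume) := by
    rw [← Measure.volume_eq_prod]; exact hH
  set W : TT n → ℝ := fun x => ∫ y in {y : TT n | dist x y < R₀}, q (x, y) with hWdef
  set ε : ℝ := ∫ x, W x with hεdef
  have hεS : ε = ∫ p in {p : TT n × TT n | dist p.1 p.2 < R₀}, q p ∂(volume.prod volume) :=
    (fubini_set n R₀ q hHq).symm
  have hW0 : ∀ x, 0 ≤ W x := fun x =>
    setIntegral_nonneg (setx_meas n R₀ x) (fun y _ => hq0 (x, y))
  have hε0 : 0 ≤ ε := integral_nonneg hW0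
  have hWint : Integrable W := by
    have hGint : Integrable ({p : TT n × TT n | dist p.1 p.2 < R₀}.indicator q)
        (volume.prod volume) := hHq.indicator (setS_meas n R₀)
    have := hGint.integral_prod_left
    refine this.congr ?_
    filter_upwards with x
    show (∫ y, {p : TT n × TT n | dist p.1 p.2 < R₀}.indicator q (x, y))
      = ∫ y in {y : TT n | dist x y < R₀}, q (x, y)
    rw [← integral_indicator (setx_meas n R₀ x)]
    congr 1
  set v : TT n → ℝ := fun x => (∫ z in ball x ρ, u z) / V with hvdef
  -- Claim A (a.e. pointwise bound)
  have hg2 : ∀ x : TT n, Integrable (fun z => (u x - u z)^2) := by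
    intro x
    have : (fun z => (u x - u z)^2) = fun z => (u x)^2 - (2*(u x)) * u z + u z^2 := by
      funext z; ring
    rw [this]
    exact ((integrable_const _).sub (hu1.const_mul _)).add hu2
  have claimA : ∀ᵐ x, (u x - v x)^2 ≤ W x / V := by
    filter_upwards [hHq.prod_right_ae] with x hqx
    have hnum : u x - v x = (∫ z in ball x ρ, (u x - u z)) / V := by
      rw [hvdef]
      simp only
      rw [integral_sub (integrableOn_const (C := u x) measure_ball_lt_top.ne) hu1.integrableOn,
        setIntegral_const]
      simp only [smul_eq_mul, Measure.real, hVb x]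
      field_simp
    rw [hnum, div_pow]
    have hgint : Integrable (fun z => u x - u z) (volume.restrict (ball x ρ)) :=
      ((integrable_const (u x)).sub hu1).integrableOn
    have hcs := cs_integral (volume.restrict (ball x ρ)) hgint (hg2 x).integrableOn
    rw [Measure.restrict_apply_univ, hVb x] at hcs
    have hsq : ∫ z in ball x ρ, (u x - u z)^2 ≤ W x := by
      rw [hWdef]
      have step1 : ∫ z in ball x ρ, (u x - u z)^2 ≤ ∫ z in ball x ρ, q (x, z) := by
        refine setIntegral_mono_on (hg2 x).integrableOn hqx.integrableOn measurableSet_ball ?_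
        intro z hz
        exact hqp (x, z) (le_trans (le_of_lt (mem_ball'.mp hz)) hρ1)
      have step2 : ∫ z in ball x ρ, q (x, z) ≤ ∫ y in {y : TT n | dist x y < R₀}, q (x, y) := by
        refine setIntegral_mono_set hqx.integrableOn ?_ ?_
        · filter_upwards with z using hq0 (x, z)
        · refine HasSubset.Subset.eventuallyLE (fun z hz => ?_)
          exact lt_trans (mem_ball'.mp hz) hρR
      exact step1.trans step2
    calc (∫ z in ball x ρ, (u x - u z)) ^ 2 / V ^ 2
        ≤ (V * ∫ z in ball x ρ, (u x - u z)^2) / V ^ 2 := by gcongr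
      _ = (∫ z in ball x ρ, (u x - u z)^2) / V := by
          rw [pow_two]; rw [mul_div_mul_left _ _ hV.ne']
      _ ≤ W x / V := by gcongr
  -- Claim C (one-step oscillation)
  have claimC : ∀ x y : TT n, dist x y ≤ ρ → (v x - v y)^2 ≤ ε / V^2 := by
    intro x y hxy
    set m : Measure (TT n × TT n) := (volume.restrict (ball x ρ)).prod (volume.restrict (ball y ρ)) with hm
    have hmr : m = (volume.prod volume).restrict ((ball x ρ) ×ˢ (ball y ρ)) := by
      rw [hm, Measure.prod_restrict]
    have hfint : Integrable (fun p : TT n × TT n => u p.1 - u p.2) m := by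
      refine ((hu1.integrableOn.mul_prod (integrable_const 1)).sub
        ((integrable_const 1).mul_prod hu1.integrableOn)).congr ?_
      filter_upwards with p; simp
    have hf2int : Integrable (fun p : TT n × TT n => (u p.1 - u p.2)^2) m := by
      have h1 : Integrable (fun p : TT n × TT n => u p.1^2 * 1) m :=
        hu2.integrableOn.mul_prod (integrable_const 1)
      have h2 : Integrable (fun p : TT n × TT n => u p.1 * u p.2) m :=
        hu1.integrableOn.mul_prod hu1.integrableOn
      have h3 : Integrable (fun p : TT n × TT n => (1:ℝ) * u p.2^2) m :=
        (integrable_const 1).mul_prod hu2.integrableOn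
      refine ((h1.sub (h2.const_mul 2)).add h3).congr ?_
      filter_upwards with p; simp only [Pi.sub_apply, Pi.add_apply]; ring
    have hnum : v x - v y = (∫ p, (u p.1 - u p.2) ∂m) / (V*V) := by
      rw [integral_sub ((hu1.integrableOn.mul_prod (integrable_const 1)).congr
          (by filter_upwards with p; simp))
        (((integrable_const 1).mul_prod hu1.integrableOn).congr
          (by filter_upwards with p; simp))]
      have e1 : ∫ p, u p.1 ∂m = (∫ z in ball x ρ, u z) * V := by
        calc ∫ p, u p.1 ∂m = ∫ p, u p.1 * 1 ∂m := by simp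
          _ = (∫ z in ball x ρ, u z) * (∫ z in ball y ρ, (1:ℝ)) := by
              rw [hm]; exact integral_prod_mul u (fun _ => (1:ℝ))
          _ = (∫ z in ball x ρ, u z) * V := by rw [setIntegral_const]; simp [Measure.real, hVb y]
      have e2 : ∫ p, u p.2 ∂m = V * (∫ z in ball y ρ, u z) := by
        calc ∫ p, u p.2 ∂m = ∫ p, 1 * u p.2 ∂m := by simp
          _ = (∫ z in ball x ρ, (1:ℝ)) * (∫ z in ball y ρ, u z) := by
              rw [hm]; exact integral_prod_mul (fun _ => (1:ℝ)) u
          _ = V * (∫ z in ball y ρ, u z) := by rw [setIntegral_const]; simp [Measure.real, hVb x]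
      rw [e1, e2, hvdef]
      simp only
      field_simp
    have hcs := cs_integral m hfint hf2int
    have hmuniv : (m Set.univ).toReal = V * V := by
      rw [hm, ← Set.univ_prod_univ, Measure.prod_prod, Measure.restrict_apply_univ,
        Measure.restrict_apply_univ, ENNReal.toReal_mul, hVb x, hVb y]
    rw [hmuniv] at hcs
    have hsq : ∫ p, (u p.1 - u p.2)^2 ∂m ≤ ε := by
      rw [hmr, hεS]
      have hball : ∀ p : TT n × TT n, p ∈ (ball x ρ) ×ˢ (ball y ρ) → dist p.1 p.2 < 3*ρ := by
        rintro ⟨a, b⟩ ⟨ha, hb⟩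
        have h1 : dist a x < ρ := mem_ball.mp ha
        have h2 : dist b y < ρ := mem_ball.mp hb
        calc dist a b ≤ dist a x + dist x y + dist y b := dist_triangle4 a x y b
          _ < ρ + ρ + ρ :=
              add_lt_add (add_lt_add_of_lt_of_le h1 hxy) (by rwa [dist_comm])
          _ = 3*ρ := by ring
      have step1 : ∫ p in (ball x ρ) ×ˢ (ball y ρ), (u p.1 - u p.2)^2 ∂(volume.prod volume)
          ≤ ∫ p in (ball x ρ) ×ˢ (ball y ρ), q p ∂(volume.prod volume) := by
        refine setIntegral_mono_on (by rw [IntegrableOn, ← hmr]; exact hf2int) hHq.integrableOn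
          (measurableSet_ball.prod measurableSet_ball) ?_
        intro p hp
        exact hqp p (le_trans (le_of_lt (hball p hp)) h3ρ1)
      have step2 : ∫ p in (ball x ρ) ×ˢ (ball y ρ), q p ∂(volume.prod volume)
          ≤ ∫ p in {p : TT n × TT n | dist p.1 p.2 < R₀}, q p ∂(volume.prod volume) := by
        refine setIntegral_mono_set hHq.integrableOn ?_ ?_
        · filter_upwards with p using hq0 p
        · refine HasSubset.Subset.eventuallyLE (fun p hp => ?_)
          exact lt_trans (hball p hp) h3ρR
      exact step1.trans step2
    calc (v x - v y)^2
        = (∫ p, (u p.1 - u p.2) ∂m)^2 / (V*V)^2 := by rw [hnum, div_pow]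
      _ ≤ ((V*V) * ∫ p, (u p.1 - u p.2)^2 ∂m) / (V*V)^2 := by gcongr
      _ = (∫ p, (u p.1 - u p.2)^2 ∂m) / (V*V) := by
          rw [pow_two]; rw [mul_div_mul_left _ _ (by positivity : (V*V) ≠ 0)]
      _ ≤ ε / (V*V) := by gcongr
      _ = ε / V^2 := by rw [pow_two]
  -- Claim D (chain)
  have hεV : 0 ≤ ε / V^2 := by positivity
  have hstep : ∀ a b : TT n, dist a b ≤ ρ → |v a - v b| ≤ Real.sqrt (ε/V^2) := fun a b h =>
    Real.abs_le_sqrt (claimC a b h)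
  have claimD : ∀ x : TT n, (v x - v 0)^2 ≤ (N:ℝ)^2 * (ε/V^2) := by
    intro x
    have h := chain_bound n ρ hρ N hN1 (le_trans hNρ (le_of_eq hρdef.symm)) v _ hstep x 0
    calc (v x - v 0)^2 = |v x - v 0|^2 := (sq_abs _).symm
      _ ≤ ((N:ℝ) * Real.sqrt (ε/V^2))^2 := by
          apply sq_le_sq'
          · linarith [abs_nonneg (v x - v 0), (abs_le.mp (le_refl |v x - v 0|))]
          · exact h
      _ = (N:ℝ)^2 * (ε/V^2) := by
          rw [mul_pow, Real.sq_sqrt hεV]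
  -- combine
  refine ⟨v 0, ?_⟩
  have hae : ∀ᵐ x, (u x - v 0)^2 ≤ 2/V * W x + 2*(N:ℝ)^2*(ε/V^2) := by
    filter_upwards [claimA] with x hx
    have h1 : (u x - v 0)^2 ≤ 2*(u x - v x)^2 + 2*(v x - v 0)^2 := by
      nlinarith [sq_nonneg ((u x - v x) - (v x - v 0))]
    have h2 : 2*(u x - v x)^2 ≤ 2 * (W x / V) := by linarith
    have h3 : 2*(v x - v 0)^2 ≤ 2*((N:ℝ)^2 * (ε/V^2)) := by linarith [claimD x]
    calc (u x - v 0)^2 ≤ 2*(W x / V) + 2*((N:ℝ)^2 * (ε/V^2)) := by linarith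
      _ = 2/V * W x + 2*(N:ℝ)^2*(ε/V^2) := by ring
  have hint : Integrable (fun x => (u x - v 0)^2) := by
    have : (fun x => (u x - v 0)^2) = fun x => u x^2 - (2*(v 0)) * u x + (v 0)^2 := by
      funext z; ring
    rw [this]
    exact ((hu2.sub (hu1.const_mul _)).add (integrable_const _))
  have hRHSint : Integrable (fun x => 2/V * W x + 2*(N:ℝ)^2*(ε/V^2)) :=
    (hWint.const_mul _).add (integrable_const _)
  have hmono := integral_mono_ae hint hRHSint hae
  have hvol : ((volume : Measure (TT n)) Set.univ).toReal = 1 := by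
    rw [vol_univ_one]; simp
  rw [integral_add (hWint.const_mul _) (integrable_const _), integral_const_mul,
    integral_const, Measure.real, hvol, ← hεdef] at hmono
  calc ∫ x, (u x - v 0)^2 ≤ 2/V * ε + (1:ℝ) • (2*(N:ℝ)^2*(ε/V^2)) := hmono
    _ = (2 / V + 2*(N:ℝ)^2 / V^2) * ε := by
        simp only [smul_eq_mul, one_mul]
        field_simp

end Helpers

theorem stmt_7 (n : ℕ) (hn : 0 < n) (α R₀ : ℝ) (hα : 0 < α) (hα2 : α < 2) (hR : 0 < R₀)
    (u : ℕ → (Fin n → AddCircle (1:ℝ)) → ℝ)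
    (hmeas : ∀ k, Measurable (u k))
    (hL2 : ∀ k, ∫ x, (u k x)^2 = 1)
    (hH : ∀ k, Integrable (fun p : (Fin n → AddCircle (1:ℝ)) × (Fin n → AddCircle (1:ℝ)) =>
      (u k p.1 - u k p.2)^2 / dist p.1 p.2 ^ ((n:ℝ)+α)))
    (hvanish : Tendsto
      (fun k => ∫ x, ∫ y in {y | dist x y < R₀}, (u k x - u k y)^2 / dist x y ^ ((n:ℝ)+α))
      atTop (nhds 0)) :
    ∃ σ : ℕ → ℕ, StrictMono σ ∧ ∃ cst : ℝ, |cst| = 1 ∧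
      Tendsto (fun k => ∫ x, (u (σ k) x - cst)^2) atTop (nhds 0) := by
  have hvol : ((volume : Measure (TT n)) Set.univ).toReal = 1 := by
    rw [vol_univ_one]; simp
  -- integrability of u k and u k ^ 2
  have hu2 : ∀ k, Integrable (fun x => u k x ^ 2) := by
    intro k
    by_contra h
    have := hL2 k
    rw [integral_undef h] at this
    norm_num at this
  have hu1 : ∀ k, Integrable (u k) := by
    intro k
    have h2 : MemLp (u k) 2 volume :=
      (memLp_two_iff_integrable_sq (hmeas k).aestronglyMeasurable).mpr (hu2 k)
    exact h2.integrable one_le_two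
  -- choose N
  have hρ0 : (0:ℝ) < min R₀ 1 / 4 := by
    have := lt_min hR one_pos
    positivity
  obtain ⟨N0, hN0⟩ := exists_nat_ge (1 / (min R₀ 1 / 4))
  set N : ℕ := N0 + 1 with hNdef
  have hN1 : 1 ≤ N := Nat.le_add_left 1 N0
  have hNρ : 1/(N:ℝ) ≤ min R₀ 1 / 4 := by
    have hNN : 1 / (min R₀ 1 / 4) ≤ (N:ℝ) := by
      refine hN0.trans ?_
      exact_mod_cast Nat.le_succ N0
    have hNpos : (0:ℝ) < N := lt_of_lt_of_le (by positivity) hNN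
    rw [div_le_iff₀ hNpos]
    rw [div_le_iff₀ hρ0] at hNN
    linarith
  set M : ℝ := 2 / Vol n R₀ + 2*(N:ℝ)^2 / (Vol n R₀)^2 with hMdef
  set ε : ℕ → ℝ :=
    fun k => ∫ x, ∫ y in {y | dist x y < R₀}, (u k x - u k y)^2 / dist x y ^ ((n:ℝ)+α) with hεdef
  have hkey : ∀ k, ∃ c : ℝ, ∫ x, (u k x - c)^2 ≤ M * ε k := by
    intro k
    exact key_lemma n α R₀ hα hR (u k) (hu1 k) (hu2 k) (hH k) N hN1 hNρ
  choose c hc using hkey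
  set e : ℕ → ℝ := fun k => ∫ x, (u k x - c k)^2 with hedef
  have hsub2 : ∀ k (a : ℝ), Integrable (fun x => (u k x - a)^2) := by
    intro k a
    have : (fun x => (u k x - a)^2) = fun x => u k x^2 - (2*a) * u k x + a^2 := by
      funext z; ring
    rw [this]
    exact (((hu2 k).sub ((hu1 k).const_mul _)).add (integrable_const _))
  have he0 : ∀ k, 0 ≤ e k := fun k => integral_nonneg fun x => sq_nonneg _
  have hetend : Tendsto e atTop (𝓝 0) := by
    refine squeeze_zero he0 hc ?_
    have := hvanish.const_mul M
    simpa using this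
  -- expansion identity
  set m : ℕ → ℝ := fun k => ∫ x, u k x with hmdef
  have expand : ∀ k (a : ℝ), ∫ x, (u k x - a)^2 = 1 - 2*a*(m k) + a^2 := by
    intro k a
    have hpt : ∀ x, (u k x - a)^2 = u k x^2 - (2*a) * u k x + a^2 := fun x => by ring
    simp_rw [hpt]
    rw [integral_add ((((hu2 k).sub ((hu1 k).const_mul (2*a)))).congr
        (by filter_upwards with x; simp only [Pi.sub_apply])) (integrable_const _),
      integral_sub (hu2 k) ((hu1 k).const_mul _), integral_const_mul, integral_const,
      Measure.real, hvol, hL2 k]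
    simp only [smul_eq_mul, one_mul]
    try ring
  have h1m : ∀ k, 1 - (m k)^2 = ∫ x, (u k x - m k)^2 := by
    intro k
    rw [expand k (m k)]; ring
  have h1m0 : ∀ k, 0 ≤ 1 - (m k)^2 := by
    intro k
    rw [h1m k]
    exact integral_nonneg fun x => sq_nonneg _
  have h1me : ∀ k, 1 - (m k)^2 ≤ e k := by
    intro k
    have hek : e k = 1 - 2*(c k)*(m k) + (c k)^2 := expand k (c k)
    nlinarith [sq_nonneg (m k - c k)]
  have hmIcc : ∀ k, m k ∈ Set.Icc (-1:ℝ) 1 := by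
    intro k
    have := h1m0 k
    constructor <;> nlinarith
  obtain ⟨cst, hcstIcc, σ, hσ, hσtend⟩ := isCompact_Icc.tendsto_subseq hmIcc
  have hm2tend : Tendsto (fun k => 1 - (m k)^2) atTop (𝓝 0) :=
    squeeze_zero h1m0 h1me hetend
  have hm2σ : Tendsto (fun k => 1 - (m (σ k))^2) atTop (𝓝 0) :=
    hm2tend.comp hσ.tendsto_atTop
  have hlim2 : Tendsto (fun k => 1 - (m (σ k))^2) atTop (𝓝 (1 - cst^2)) := by
    have hc2 : Tendsto (fun k => (m (σ k))^2) atTop (𝓝 (cst^2)) := by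
      have := hσtend.mul hσtend
      simpa [pow_two, Function.comp] using this
    simpa using (tendsto_const_nhds.sub hc2)
  have hcst2 : cst^2 = 1 := by
    have := tendsto_nhds_unique hm2σ hlim2
    linarith
  have habs : |cst| = 1 := by
    have : |cst| = Real.sqrt (cst^2) := (Real.sqrt_sq_eq_abs cst).symm
    rw [this, hcst2, Real.sqrt_one]
  refine ⟨σ, hσ, cst, habs, ?_⟩
  have hfun : (fun k => ∫ x, (u (σ k) x - cst)^2) = fun k => 1 - 2*cst*(m (σ k)) + cst^2 :=
    funext fun k => expand (σ k) cst
  rw [hfun]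
  have t1 : Tendsto (fun k => 1 - 2*cst*(m (σ k)) + cst^2) atTop
      (𝓝 (1 - 2*cst*cst + cst^2)) := by
    have h1 : Tendsto (fun k => 2*cst*(m (σ k))) atTop (𝓝 (2*cst*cst)) := by
      have := hσtend.const_mul (2*cst)
      simpa [Function.comp] using this
    simpa using (tendsto_const_nhds.sub h1).add tendsto_const_nhds
  have h0 : 1 - 2*cst*cst + cst^2 = 0 := by nlinarith
  rwa [h0] at t1
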